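/- Let p be an odd prime and d ≥ 1. If K is a closed subgroup of the symplectic group Sp_{2d}(ℤ_p) whose image under the reduction map Sp_{2d}(ℤ_p) → Sp_{2d}(ℤ/p²ℤ) is all of Sp_{2d}(ℤ/p²ℤ), then K = Sp_{2d}(ℤ_p). (Lemma 2.2.1(a) instantiated at G = Sp_{2d} over ℤ_p.) -/

import Mathlib

open Matrix

/-- The standard symplectic matrix `J = ((0, I), (−I, 0))`. -/
def Jmat (d : ℕ) (R : Type*) [CommRing R] :
    Matrix (Fin d ⊕ Fin d) (Fin d ⊕ Fin d) R :=
  Matrix.fromBlocks 0 1 (-1) 0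

/-- The symplectic group `Sp_{2d}(R) = {g ∈ GL_{2d}(R) : gᵀ J g = J}`, as a subgroup of
`GL_{2d}(R)`. -/
def SpSubgroup (d : ℕ) (R : Type*) [CommRing R] : Subgroup (GL (Fin d ⊕ Fin d) R) where
  carrier := {g | (g : Matrix (Fin d ⊕ Fin d) (Fin d ⊕ Fin d) R)ᵀ * Jmat d R * g = Jmat d R}
  one_mem' := by simp
  mul_mem' := by
    intro a b ha hb
    simp only [Set.mem_setOf_eq, Units.val_mul, Matrix.transpose_mul] at *
    have h : (b : Matrix (Fin d ⊕ Fin d) (Fin d ⊕ Fin d) R)ᵀ *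
        (a : Matrix (Fin d ⊕ Fin d) (Fin d ⊕ Fin d) R)ᵀ * Jmat d R *
        ((a : Matrix (Fin d ⊕ Fin d) (Fin d ⊕ Fin d) R) *
          (b : Matrix (Fin d ⊕ Fin d) (Fin d ⊕ Fin d) R)) =
        (b : Matrix (Fin d ⊕ Fin d) (Fin d ⊕ Fin d) R)ᵀ *
          ((a : Matrix (Fin d ⊕ Fin d) (Fin d ⊕ Fin d) R)ᵀ * Jmat d R *
            (a : Matrix (Fin d ⊕ Fin d) (Fin d ⊕ Fin d) R)) *
          (b : Matrix (Fin d ⊕ Fin d) (Fin d ⊕ Fin d) R) := by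
      noncomm_ring
    rw [h, ha, hb]
  inv_mem' := by
    intro a ha
    simp only [Set.mem_setOf_eq] at *
    have h2 : (a : Matrix (Fin d ⊕ Fin d) (Fin d ⊕ Fin d) R) *
        ((a⁻¹ : GL (Fin d ⊕ Fin d) R) : Matrix (Fin d ⊕ Fin d) (Fin d ⊕ Fin d) R) = 1 := by
      rw [← Units.val_mul, mul_inv_cancel, Units.val_one]
    have h1 : ((a⁻¹ : GL (Fin d ⊕ Fin d) R) : Matrix (Fin d ⊕ Fin d) (Fin d ⊕ Fin d) R)ᵀ *
        (a : Matrix (Fin d ⊕ Fin d) (Fin d ⊕ Fin d) R)ᵀ = 1 := by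
      rw [← Matrix.transpose_mul, h2, Matrix.transpose_one]
    calc ((a⁻¹ : GL (Fin d ⊕ Fin d) R) : Matrix (Fin d ⊕ Fin d) (Fin d ⊕ Fin d) R)ᵀ * Jmat d R *
          ((a⁻¹ : GL (Fin d ⊕ Fin d) R) : Matrix (Fin d ⊕ Fin d) (Fin d ⊕ Fin d) R)
        = ((a⁻¹ : GL (Fin d ⊕ Fin d) R) : Matrix (Fin d ⊕ Fin d) (Fin d ⊕ Fin d) R)ᵀ *
            ((a : Matrix (Fin d ⊕ Fin d) (Fin d ⊕ Fin d) R)ᵀ * Jmat d R *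
              (a : Matrix (Fin d ⊕ Fin d) (Fin d ⊕ Fin d) R)) *
            ((a⁻¹ : GL (Fin d ⊕ Fin d) R) : Matrix (Fin d ⊕ Fin d) (Fin d ⊕ Fin d) R) := by
          rw [ha]
      _ = (((a⁻¹ : GL (Fin d ⊕ Fin d) R) : Matrix (Fin d ⊕ Fin d) (Fin d ⊕ Fin d) R)ᵀ *
            (a : Matrix (Fin d ⊕ Fin d) (Fin d ⊕ Fin d) R)ᵀ) * Jmat d R *
            ((a : Matrix (Fin d ⊕ Fin d) (Fin d ⊕ Fin d) R) *
              ((a⁻¹ : GL (Fin d ⊕ Fin d) R) : Matrix (Fin d ⊕ Fin d) (Fin d ⊕ Fin d) R)) := by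
          noncomm_ring
      _ = Jmat d R := by rw [h1, h2, one_mul, mul_one]

namespace Stmt4Aux

set_option linter.unusedSectionVars false
set_option maxHeartbeats 1000000

variable {p : ℕ} [Fact p.Prime] {ι : Type*} [Fintype ι] [DecidableEq ι]

/-- Entrywise congruence mod `p^n`. -/
def cong (n : ℕ) (A B : Matrix ι ι ℤ_[p]) : Prop :=
  ∀ i j, (p : ℤ_[p]) ^ n ∣ (A - B) i j

theorem cong.symm {n : ℕ} {A B : Matrix ι ι ℤ_[p]} (h : cong n A B) : cong n B A := by
  intro i j
  have e : (B - A) i j = -((A - B) i j) := by simp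
  rw [e]
  exact (h i j).neg_right

theorem cong.trans {n : ℕ} {A B C : Matrix ι ι ℤ_[p]} (h1 : cong n A B) (h2 : cong n B C) :
    cong n A C := by
  intro i j
  have e : (A - C) i j = (A - B) i j + (B - C) i j := by simp
  rw [e]
  exact dvd_add (h1 i j) (h2 i j)

theorem cong.mul_left {n : ℕ} (C : Matrix ι ι ℤ_[p]) {A B : Matrix ι ι ℤ_[p]}
    (h : cong n A B) : cong n (C * A) (C * B) := by
  intro i j
  have e : (C * A - C * B) i j = ∑ k, C i k * (A - B) k j := by
    rw [← Matrix.mul_sub]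
    simp [Matrix.mul_apply]
  rw [e]
  exact Finset.dvd_sum fun k _ => (h k j).mul_left _

theorem cong.mul_right {n : ℕ} (C : Matrix ι ι ℤ_[p]) {A B : Matrix ι ι ℤ_[p]}
    (h : cong n A B) : cong n (A * C) (B * C) := by
  intro i j
  have e : (A * C - B * C) i j = ∑ k, (A - B) i k * C k j := by
    rw [← Matrix.sub_mul]
    simp [Matrix.mul_apply]
  rw [e]
  exact Finset.dvd_sum fun k _ => (h i k).mul_right _

theorem cong.exists_eq {n : ℕ} {A B : Matrix ι ι ℤ_[p]} (h : cong n A B) :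
    ∃ E, A = B + (p : ℤ_[p]) ^ n • E := by
  refine ⟨Matrix.of fun i j => (h i j).choose, ?_⟩
  ext i j
  have hs : A i j - B i j = (p : ℤ_[p]) ^ n * (h i j).choose := (h i j).choose_spec
  simp only [Matrix.add_apply, Matrix.smul_apply, Matrix.of_apply, smul_eq_mul]
  linear_combination hs

theorem cong.units_inv {n : ℕ} {g h : (Matrix ι ι ℤ_[p])ˣ}
    (hc : cong n (↑g : Matrix ι ι ℤ_[p]) (↑h : Matrix ι ι ℤ_[p])) :
    cong n (↑g⁻¹ : Matrix ι ι ℤ_[p]) (↑h⁻¹ : Matrix ι ι ℤ_[p]) := by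
  have h1 := (hc.symm.mul_left (↑g⁻¹ : Matrix ι ι ℤ_[p])).mul_right
    (↑h⁻¹ : Matrix ι ι ℤ_[p])
  have e1 : (↑g⁻¹ : Matrix ι ι ℤ_[p]) * (↑h : Matrix ι ι ℤ_[p]) * (↑h⁻¹ : Matrix ι ι ℤ_[p])
      = (↑g⁻¹ : Matrix ι ι ℤ_[p]) := by
    rw [mul_assoc, Units.mul_inv, mul_one]
  have e2 : (↑g⁻¹ : Matrix ι ι ℤ_[p]) * (↑g : Matrix ι ι ℤ_[p]) * (↑h⁻¹ : Matrix ι ι ℤ_[p])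
      = (↑h⁻¹ : Matrix ι ι ℤ_[p]) := by
    rw [Units.inv_mul, one_mul]
  rwa [e1, e2] at h1

theorem isUnit_of_toZMod_ne_zero {z : ℤ_[p]} (h : PadicInt.toZMod z ≠ 0) : IsUnit z := by
  rw [PadicInt.isUnit_iff]
  by_contra hn
  have hlt : ‖z‖ < 1 := lt_of_le_of_ne (PadicInt.norm_le_one z) hn
  obtain ⟨w, rfl⟩ := (PadicInt.norm_lt_one_iff_dvd z).mp hlt
  simp [ZMod.natCast_self] at h

theorem isUnit_of_cong_one {A : Matrix ι ι ℤ_[p]} (h : ∀ i j, (p : ℤ_[p]) ∣ (A - 1) i j) :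
    IsUnit A := by
  rw [Matrix.isUnit_iff_isUnit_det]
  apply isUnit_of_toZMod_ne_zero
  have hmap : A.map (PadicInt.toZMod (p := p)) = 1 := by
    have e : A.map (PadicInt.toZMod (p := p)) = (1 : Matrix ι ι ℤ_[p]).map PadicInt.toZMod := by
      ext i j
      obtain ⟨v, hv⟩ := h i j
      simp only [Matrix.sub_apply] at hv
      have : A i j = (1 : Matrix ι ι ℤ_[p]) i j + (p : ℤ_[p]) * v := by linear_combination hv
      simp [Matrix.map_apply, this, ZMod.natCast_self]
    rw [e, Matrix.map_one _ (map_zero _) (map_one _)]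
  have hdet : PadicInt.toZMod A.det = (1 : ZMod p) := by
    have e := RingHom.map_det (PadicInt.toZMod (p := p)) A
    rw [RingHom.mapMatrix_apply, hmap] at e
    simpa using e
  rw [hdet]
  exact one_ne_zero

theorem coeff_dvd (hp3 : 3 ≤ p) {n m : ℕ} (hn : 2 ≤ n) (hm : 2 ≤ m) (hm' : m ≤ p) :
    (p : ℤ_[p]) ^ (n + 1) ∣ (p.choose m : ℤ_[p]) * ((p : ℤ_[p]) ^ (n - 1)) ^ m := by
  obtain ⟨a, rfl⟩ : ∃ a, n = a + 2 := ⟨n - 2, by omega⟩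
  have hn1 : a + 2 - 1 = a + 1 := by omega
  rw [hn1, ← pow_mul]
  rcases eq_or_lt_of_le hm' with rfl | hlt
  · rw [Nat.choose_self, Nat.cast_one, one_mul]
    exact pow_dvd_pow _ (by nlinarith)
  · have h1 : (p : ℤ_[p]) ∣ (p.choose m : ℤ_[p]) := by
      have hd : p ∣ p.choose m := Nat.Prime.dvd_choose_self Fact.out (by omega) hlt
      exact_mod_cast Nat.cast_dvd_cast (α := ℤ_[p]) hd
    calc (p : ℤ_[p]) ^ (a + 2 + 1) ∣ (p : ℤ_[p]) ^ (1 + (a + 1) * m) :=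
          pow_dvd_pow _ (by nlinarith)
      _ = (p : ℤ_[p]) * (p : ℤ_[p]) ^ ((a + 1) * m) := by rw [pow_add, pow_one]
      _ ∣ (p.choose m : ℤ_[p]) * (p : ℤ_[p]) ^ ((a + 1) * m) :=
          mul_dvd_mul h1 dvd_rfl

theorem pow_p_cong (hp3 : 3 ≤ p) {n : ℕ} (hn : 2 ≤ n) (D : Matrix ι ι ℤ_[p]) :
    cong (n + 1) ((1 + (p : ℤ_[p]) ^ (n - 1) • D) ^ p) (1 + (p : ℤ_[p]) ^ n • D) := by
  set c : ℤ_[p] := (p : ℤ_[p]) ^ (n - 1) with hc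
  have key : (1 + c • D) ^ p
      = ∑ m ∈ Finset.range (p + 1), ((p.choose m : ℤ_[p]) * c ^ m) • D ^ m := by
    rw [add_comm (1 : Matrix ι ι ℤ_[p]) (c • D), (Commute.one_right (c • D)).add_pow]
    refine Finset.sum_congr rfl fun m _ => ?_
    rw [one_pow, mul_one]
    rw [← (Nat.cast_commute (p.choose m) ((c • D) ^ m)).eq]
    rw [smul_pow, ← nsmul_eq_mul, ← Nat.cast_smul_eq_nsmul ℤ_[p], smul_smul]
  have f0 : ((p.choose 0 : ℤ_[p]) * c ^ 0) • (D ^ 0 : Matrix ι ι ℤ_[p]) = 1 := by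
    simp
  have f1 : ((p.choose 1 : ℤ_[p]) * c ^ 1) • (D ^ 1 : Matrix ι ι ℤ_[p])
      = (p : ℤ_[p]) ^ n • D := by
    rw [Nat.choose_one_right, pow_one, pow_one]
    congr 1
    rw [hc, ← pow_succ']
    congr 1
    omega
  have hsplit : (1 + c • D) ^ p = 1 + (p : ℤ_[p]) ^ n • D
      + ∑ m ∈ Finset.Ico 2 (p + 1), ((p.choose m : ℤ_[p]) * c ^ m) • D ^ m := by
    rw [key, Finset.range_eq_Ico,
      Finset.sum_eq_sum_Ico_succ_bot (by omega : 0 < p + 1),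
      Finset.sum_eq_sum_Ico_succ_bot (by omega : 1 < p + 1), f0, f1, add_assoc]
  intro i j
  have e : ((1 + c • D) ^ p - (1 + (p : ℤ_[p]) ^ n • D)) i j
      = ∑ m ∈ Finset.Ico 2 (p + 1), ((p.choose m : ℤ_[p]) * c ^ m) * (D ^ m) i j := by
    rw [hsplit]
    simp [Matrix.sub_apply, Matrix.add_apply, Matrix.sum_apply, Matrix.smul_apply]
  rw [e]
  refine Finset.dvd_sum fun m hm => ?_
  rw [Finset.mem_Ico] at hm
  exact ((coeff_dvd hp3 hn hm.1 (by omega)).mul_right _)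

theorem Jmat_transpose (d : ℕ) (R : Type*) [CommRing R] : (Jmat d R)ᵀ = -Jmat d R := by
  rw [Jmat, Matrix.fromBlocks_transpose, Matrix.fromBlocks_neg]
  simp

theorem Jmat_mul_Jmat (d : ℕ) (R : Type*) [CommRing R] : Jmat d R * Jmat d R = -1 := by
  rw [Jmat, Matrix.fromBlocks_multiply, ← Matrix.fromBlocks_one, Matrix.fromBlocks_neg]
  simp

theorem Jmat_map {R S : Type*} [CommRing R] [CommRing S] (d : ℕ) (f : R →+* S) :
    (Jmat d R).map f = Jmat d S := by
  ext (i|i) (j|j) <;>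
    simp [Jmat, Matrix.map_apply, Matrix.one_apply, apply_ite f]

theorem mapGL_mem_Sp {R S : Type*} [CommRing R] [CommRing S] {d : ℕ} (f : R →+* S)
    {x : GL (Fin d ⊕ Fin d) R} (hx : x ∈ SpSubgroup d R) :
    Matrix.GeneralLinearGroup.map f x ∈ SpSubgroup d S := by
  have hx' : (↑x : Matrix (Fin d ⊕ Fin d) (Fin d ⊕ Fin d) R)ᵀ * Jmat d R *
      (↑x : Matrix (Fin d ⊕ Fin d) (Fin d ⊕ Fin d) R) = Jmat d R := hx
  show (↑(Matrix.GeneralLinearGroup.map f x) : Matrix (Fin d ⊕ Fin d) (Fin d ⊕ Fin d) S)ᵀ *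
      Jmat d S *
      (↑(Matrix.GeneralLinearGroup.map f x) : Matrix (Fin d ⊕ Fin d) (Fin d ⊕ Fin d) S)
      = Jmat d S
  have hcoe : (↑(Matrix.GeneralLinearGroup.map f x) : Matrix (Fin d ⊕ Fin d) (Fin d ⊕ Fin d) S)
      = (↑x : Matrix (Fin d ⊕ Fin d) (Fin d ⊕ Fin d) R).map f := rfl
  rw [hcoe, ← Matrix.transpose_map, ← Jmat_map d f, ← Matrix.map_mul, ← Matrix.map_mul, hx']

variable {d : ℕ}

local notation "Mat" => Matrix (Fin d ⊕ Fin d) (Fin d ⊕ Fin d) ℤ_[p]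

theorem main_ind (hp3 : 3 ≤ p)
    (K : Subgroup (GL (Fin d ⊕ Fin d) ℤ_[p]))
    (hsub : K ≤ SpSubgroup d ℤ_[p])
    (hsurj : ∀ g : GL (Fin d ⊕ Fin d) (ZMod (p ^ 2)), g ∈ SpSubgroup d (ZMod (p ^ 2)) →
      ∃ k ∈ K, Matrix.GeneralLinearGroup.map (PadicInt.toZModPow 2) k = g)
    (n : ℕ) (hn : 2 ≤ n) :
    ∀ x : GL (Fin d ⊕ Fin d) ℤ_[p], x ∈ SpSubgroup d ℤ_[p] →
      ∃ k ∈ K, cong n (↑k : Mat) (↑x : Mat) := by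
  induction n, hn using Nat.le_induction with
  | base =>
    intro x hx
    obtain ⟨k, hkK, hmap⟩ := hsurj (Matrix.GeneralLinearGroup.map (PadicInt.toZModPow 2) x)
      (mapGL_mem_Sp _ hx)
    refine ⟨k, hkK, fun i j => ?_⟩
    have hmat : ((↑k : Mat)).map (PadicInt.toZModPow 2)
        = ((↑x : Mat)).map (PadicInt.toZModPow 2) := congrArg Units.val hmap
    have h2 : PadicInt.toZModPow 2 ((↑k : Mat) i j) = PadicInt.toZModPow 2 ((↑x : Mat) i j) := by
      have := congrFun (congrFun hmat i) j
      simpa [Matrix.map_apply] using this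
    have hker : ((↑k : Mat) - ↑x) i j ∈ RingHom.ker (PadicInt.toZModPow (p := p) 2) := by
      rw [RingHom.mem_ker, Matrix.sub_apply, map_sub, h2, sub_self]
    rwa [PadicInt.ker_toZModPow, Ideal.mem_span_singleton] at hker
  | succ n hn ih =>
    intro x hx
    obtain ⟨k, hkK, hk⟩ := ih x hx
    set J : Mat := Jmat d ℤ_[p] with hJ
    have hJT : Jᵀ = -J := Jmat_transpose d ℤ_[p]
    have hJJ : J * J = -1 := Jmat_mul_Jmat d ℤ_[p]
    have hu : x * k⁻¹ ∈ SpSubgroup d ℤ_[p] := mul_mem hx (inv_mem (hsub hkK))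
    have huSp : (↑(x * k⁻¹) : Mat)ᵀ * J * (↑(x * k⁻¹) : Mat) = J := hu
    have hucong : cong n (↑(x * k⁻¹) : Mat) 1 := by
      have h1 := (hk.symm).mul_right (↑k⁻¹ : Mat)
      have e1 : (↑x : Mat) * (↑k⁻¹ : Mat) = (↑(x * k⁻¹) : Mat) := rfl
      have e2 : (↑k : Mat) * (↑k⁻¹ : Mat) = 1 := Units.mul_inv k
      rwa [e1, e2] at h1
    obtain ⟨B, hB⟩ := hucong.exists_eq
    have hc0 : ((p : ℤ_[p]) ^ n) ≠ 0 :=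
      pow_ne_zero _ (by exact_mod_cast (Fact.out (p := p.Prime)).ne_zero)
    have hBJ : Bᵀ * J + J * B = -(((p : ℤ_[p]) ^ n) • (Bᵀ * J * B)) := by
      have expand : (↑(x * k⁻¹) : Mat)ᵀ * J * (↑(x * k⁻¹) : Mat)
          = J + ((p : ℤ_[p]) ^ n) • (Bᵀ * J + J * B + ((p : ℤ_[p]) ^ n) • (Bᵀ * J * B)) := by
        rw [hB]
        rw [transpose_add, transpose_smul, transpose_one]
        simp only [add_mul, mul_add, one_mul, mul_one, smul_mul_assoc, mul_smul_comm,
          smul_add, smul_smul, mul_assoc]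
        abel
      rw [huSp] at expand
      have h0 : ((p : ℤ_[p]) ^ n) • (Bᵀ * J + J * B + ((p : ℤ_[p]) ^ n) • (Bᵀ * J * B)) = 0 :=
        (left_eq_add.mp expand)
      have h1 : Bᵀ * J + J * B + ((p : ℤ_[p]) ^ n) • (Bᵀ * J * B) = 0 := by
        ext i j
        have h2 : (((p : ℤ_[p]) ^ n) • (Bᵀ * J + J * B + ((p : ℤ_[p]) ^ n) • (Bᵀ * J * B))) i j = (0 : Mat) i j := by rw [h0]
        simp only [Matrix.smul_apply, smul_eq_mul, Matrix.zero_apply] at h2 ⊢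
        rcases mul_eq_zero.mp h2 with h | h
        · exact absurd h hc0
        · exact h
      rwa [add_eq_zero_iff_eq_neg] at h1
    obtain ⟨half, hhalf⟩ : ∃ h : ℤ_[p], 2 * h = 1 := by
      have h2u : IsUnit (2 : ℤ_[p]) := by
        apply isUnit_of_toZMod_ne_zero
        have e : (PadicInt.toZMod (2 : ℤ_[p])) = ((2 : ℕ) : ZMod p) := by
          rw [show ((2 : ℤ_[p])) = ((2 : ℕ) : ℤ_[p]) by norm_num, map_natCast]
        rw [e]
        intro hzero
        rw [ZMod.natCast_eq_zero_iff] at hzero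
        have := Nat.le_of_dvd (by norm_num) hzero
        omega
      exact h2u.exists_right_inv
    set S : Mat := Bᵀ * J * B with hS
    have hST : Sᵀ = -S := by
      rw [hS, transpose_mul, transpose_mul, transpose_transpose, hJT]
      simp [Matrix.neg_mul, Matrix.mul_neg, mul_assoc]
    have hJS_T : (J * S)ᵀ = S * J := by
      rw [transpose_mul, hST, hJT]
      simp [Matrix.neg_mul, Matrix.mul_neg]
    set Yh : Mat := B + (-((p : ℤ_[p]) ^ n * half)) • (J * S) with hYh
    have hYhsp : Yhᵀ * J + J * Yh = 0 := by
      rw [hYh, transpose_add, transpose_smul, hJS_T]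
      simp only [add_mul, mul_add, smul_mul_assoc, mul_smul_comm]
      have e1 : S * J * J = -S := by rw [mul_assoc, hJJ]; simp
      have e2 : J * (J * S) = -S := by rw [← mul_assoc, hJJ]; simp
      rw [e1, e2]
      simp only [smul_neg, neg_smul, neg_neg]
      have hq : ((p : ℤ_[p]) ^ n * half) • S + ((p : ℤ_[p]) ^ n * half) • S
          = ((p : ℤ_[p]) ^ n) • S := by
        rw [← add_smul]
        congr 1
        linear_combination (p : ℤ_[p]) ^ n * hhalf
      have hre : Bᵀ * J + ((p : ℤ_[p]) ^ n * half) • S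
            + (J * B + ((p : ℤ_[p]) ^ n * half) • S)
          = (Bᵀ * J + J * B)
            + (((p : ℤ_[p]) ^ n * half) • S + ((p : ℤ_[p]) ^ n * half) • S) := by abel
      rw [hre, hBJ, hq]
      simp
    set Y : Mat := ((p : ℤ_[p]) ^ (n - 1) * half) • Yh with hYdef
    have hYsp : Yᵀ * J + J * Y = 0 := by
      rw [hYdef, transpose_smul, smul_mul_assoc, mul_smul_comm, ← smul_add, hYhsp, smul_zero]
    have hYd : ∀ i j, (p : ℤ_[p]) ∣ Y i j := by
      intro i j
      rw [hYdef]
      simp only [Matrix.smul_apply, smul_eq_mul]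
      have hpd : (p : ℤ_[p]) ∣ (p : ℤ_[p]) ^ (n - 1) :=
        dvd_pow_self _ (by omega)
      exact dvd_mul_of_dvd_left (dvd_mul_of_dvd_left hpd half) _
    have hU1 : IsUnit ((1 : Mat) + Y) := by
      apply isUnit_of_cong_one
      intro i j
      have e : ((1 + Y - 1 : Mat)) i j = Y i j := by simp
      rw [e]
      exact hYd i j
    have hU2 : IsUnit ((1 : Mat) - Y) := by
      apply isUnit_of_cong_one
      intro i j
      have e : ((1 - Y - 1 : Mat)) i j = -(Y i j) := by simp
      rw [e]
      exact (hYd i j).neg_right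
    set w : GL (Fin d ⊕ Fin d) ℤ_[p] := hU1.unit * hU2.unit⁻¹ with hwdef
    set V : Mat := ↑hU2.unit⁻¹ with hVdef
    have hw1 : (↑w : Mat) = (1 + Y) * V := by
      rw [hwdef, Units.val_mul, hU1.unit_spec, hVdef]
    have hV1 : ((1 : Mat) - Y) * V = 1 := by
      rw [hVdef]
      exact hU2.mul_val_inv
    have hkey : ((1 : Mat) + Yᵀ) * J * (1 + Y) = ((1 : Mat) - Yᵀ) * J * (1 - Y) := by
      have l1 : ((1 : Mat) + Yᵀ) * J * (1 + Y) = J + (Yᵀ * J + J * Y) + Yᵀ * J * Y := by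
        noncomm_ring
      have l2 : ((1 : Mat) - Yᵀ) * J * (1 - Y) = J - (Yᵀ * J + J * Y) + Yᵀ * J * Y := by
        noncomm_ring
      rw [l1, l2, hYsp]
      simp
    have hwSp : w ∈ SpSubgroup d ℤ_[p] := by
      show (↑w : Mat)ᵀ * J * (↑w : Mat) = J
      rw [hw1]
      calc ((1 + Y) * V)ᵀ * J * ((1 + Y) * V)
          = Vᵀ * (((1 : Mat) + Yᵀ) * J * (1 + Y)) * V := by
            rw [transpose_mul, transpose_add, transpose_one]
            noncomm_ring
        _ = Vᵀ * (((1 : Mat) - Yᵀ) * J * (1 - Y)) * V := by rw [hkey]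
        _ = (((1 : Mat) - Y) * V)ᵀ * J * (((1 : Mat) - Y) * V) := by
            rw [transpose_mul, transpose_sub, transpose_one]
            noncomm_ring
        _ = J := by rw [hV1]; simp
    have hwcong : cong n (↑w : Mat) (1 + (p : ℤ_[p]) ^ (n - 1) • B) := by
      have hexp : ((1 : Mat) + (p : ℤ_[p]) ^ (n - 1) • B) * (1 - Y) = 1 - Y + (p : ℤ_[p]) ^ (n - 1) • B - (p : ℤ_[p]) ^ (n - 1) • (B * Y) := by
        rw [add_mul, one_mul, smul_mul_assoc, mul_sub, mul_one]
        module
      have step1 : ((1 : Mat) + Y) - ((1 : Mat) + (p : ℤ_[p]) ^ (n - 1) • B) * (1 - Y)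
          = (Y + Y) - (p : ℤ_[p]) ^ (n - 1) • B + (p : ℤ_[p]) ^ (n - 1) • (B * Y) := by
        rw [hexp]
        abel
      have h2Y : Y + Y = (p : ℤ_[p]) ^ (n - 1) • B
          + (-((p : ℤ_[p]) ^ (n - 1) * ((p : ℤ_[p]) ^ n * half))) • (J * S) := by
        have e1 : Y + Y = ((p : ℤ_[p]) ^ (n - 1) * half + (p : ℤ_[p]) ^ (n - 1) * half) • Yh := by
          rw [hYdef, add_smul]
        have e2 : (p : ℤ_[p]) ^ (n - 1) * half + (p : ℤ_[p]) ^ (n - 1) * half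
            = (p : ℤ_[p]) ^ (n - 1) * (2 * half) := by ring
        rw [e1, e2, hhalf, mul_one, hYh, smul_add, smul_smul]
        congr 2
        ring
      have hTe : ((1 : Mat) + Y) - ((1 : Mat) + (p : ℤ_[p]) ^ (n - 1) • B) * (1 - Y)
          = (-((p : ℤ_[p]) ^ (n - 1) * ((p : ℤ_[p]) ^ n * half))) • (J * S)
            + (p : ℤ_[p]) ^ (n - 1) • (B * Y) := by
        rw [step1, h2Y]
        abel
      intro i j
      have hW : ((↑w : Mat) - (1 + (p : ℤ_[p]) ^ (n - 1) • B)) i j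
          = (((((1 : Mat) + Y) - ((1 : Mat) + (p : ℤ_[p]) ^ (n - 1) • B) * (1 - Y))) * V) i j := by
        congr 1
        rw [hw1, sub_mul]
        congr 1
        rw [mul_assoc, hV1, mul_one]
      rw [hW, hTe, Matrix.mul_apply]
      refine Finset.dvd_sum fun l _ => Dvd.dvd.mul_right ?_ _
      rw [Matrix.add_apply, Matrix.smul_apply, Matrix.smul_apply, smul_eq_mul, smul_eq_mul]
      apply dvd_add
      · apply Dvd.dvd.mul_right
        rw [dvd_neg]
        have e3 : (p : ℤ_[p]) ^ (n - 1) * ((p : ℤ_[p]) ^ n * half)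
            = (p : ℤ_[p]) ^ n * ((p : ℤ_[p]) ^ (n - 1) * half) := by ring
        rw [e3]
        exact Dvd.dvd.mul_right dvd_rfl _
      · have hBY : (p : ℤ_[p]) ^ (n - 1) ∣ (B * Y) i l := by
          rw [Matrix.mul_apply]
          refine Finset.dvd_sum fun t _ => Dvd.dvd.mul_left ?_ _
          rw [hYdef]
          simp only [Matrix.smul_apply, smul_eq_mul]
          exact Dvd.dvd.mul_right (dvd_mul_right ((p : ℤ_[p]) ^ (n - 1)) half) _
        obtain ⟨e, he⟩ := hBY
        rw [he, ← mul_assoc, ← pow_add]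
        apply Dvd.dvd.mul_right
        exact pow_dvd_pow _ (by omega)
    obtain ⟨k', hk'K, hk'w⟩ := ih w hwSp
    have hk'c : cong n (↑k' : Mat) (1 + (p : ℤ_[p]) ^ (n - 1) • B) := hk'w.trans hwcong
    obtain ⟨E, hE⟩ := hk'c.exists_eq
    have hk'D : (↑k' : Mat) = 1 + (p : ℤ_[p]) ^ (n - 1) • (B + (p : ℤ_[p]) • E) := by
      rw [hE, smul_add, smul_smul]
      rw [show (p : ℤ_[p]) ^ (n - 1) * (p : ℤ_[p]) = (p : ℤ_[p]) ^ n from by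
        rw [← pow_succ]; congr 1; omega]
      rw [add_assoc]
    have hbin := pow_p_cong (ι := Fin d ⊕ Fin d) hp3 hn (B + (p : ℤ_[p]) • E)
    rw [← hk'D] at hbin
    have hfin : cong (n + 1) ((↑k' : Mat) ^ p) (↑(x * k⁻¹) : Mat) := by
      apply hbin.trans
      intro i j
      have e : ((1 + (p : ℤ_[p]) ^ n • (B + (p : ℤ_[p]) • E)) - ↑(x * k⁻¹) : Mat) i j
          = (p : ℤ_[p]) ^ (n + 1) * E i j := by
        rw [hB]
        simp only [Matrix.sub_apply, Matrix.add_apply, Matrix.smul_apply, smul_eq_mul]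
        ring
      rw [e]
      exact Dvd.intro _ rfl
    refine ⟨k' ^ p * k, mul_mem (pow_mem hk'K p) hkK, ?_⟩
    have hcoe : (↑(k' ^ p * k) : Mat) = (↑k' : Mat) ^ p * (↑k : Mat) := by
      rw [Units.val_mul, Units.val_pow_eq_pow_val]
    have hfin2 := hfin.mul_right (↑k : Mat)
    have hux : (↑(x * k⁻¹) : Mat) * (↑k : Mat) = (↑x : Mat) := by
      rw [← Units.val_mul, inv_mul_cancel_right]
    rw [hcoe]
    rwa [hux] at hfin2

end Stmt4Aux

theorem stmt4 (p : ℕ) [Fact p.Prime] (hp : Odd p) (d : ℕ) (hd : 1 ≤ d)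
    (K : Subgroup (GL (Fin d ⊕ Fin d) ℤ_[p]))
    (hsub : K ≤ SpSubgroup d ℤ_[p])
    (hclosed : IsClosed (K : Set (GL (Fin d ⊕ Fin d) ℤ_[p])))
    (hsurj : ∀ g : GL (Fin d ⊕ Fin d) (ZMod (p ^ 2)), g ∈ SpSubgroup d (ZMod (p ^ 2)) →
      ∃ k ∈ K, Matrix.GeneralLinearGroup.map (PadicInt.toZModPow 2) k = g) :
    K = SpSubgroup d ℤ_[p] := by
  have hp3 : 3 ≤ p := by
    obtain ⟨t, ht⟩ := hp
    have h2 := (Fact.out (p := p.Prime)).two_le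
    omega
  refine le_antisymm hsub ?_
  intro x hx
  choose k hkK hkc using fun n : ℕ =>
    Stmt4Aux.main_ind hp3 K hsub hsurj (n + 2) (by omega) x hx
  have hkey : ∀ (A : ℕ → Matrix (Fin d ⊕ Fin d) (Fin d ⊕ Fin d) ℤ_[p])
      (L : Matrix (Fin d ⊕ Fin d) (Fin d ⊕ Fin d) ℤ_[p]),
      (∀ n, Stmt4Aux.cong (n + 2) (A n) L) → Filter.Tendsto A Filter.atTop (nhds L) := by
    intro A L h
    refine tendsto_pi_nhds.mpr ?_
    intro i
    rw [tendsto_pi_nhds]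
    intro j
    rw [tendsto_iff_dist_tendsto_zero]
    have hb : ∀ n : ℕ, dist (A n i j) (L i j) ≤ ((p : ℝ)⁻¹) ^ (n + 2) := by
      intro n
      rw [dist_eq_norm]
      have hd2 := h n i j
      have hle : ‖(A n - L) i j‖ ≤ (p : ℝ) ^ (-(n + 2 : ℕ) : ℤ) :=
        (PadicInt.norm_le_pow_iff_mem_span_pow _ _).mpr (Ideal.mem_span_singleton.mpr hd2)
      rw [Matrix.sub_apply] at hle
      calc ‖A n i j - L i j‖ ≤ (p : ℝ) ^ (-(n + 2 : ℕ) : ℤ) := hle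
        _ = ((p : ℝ)⁻¹) ^ (n + 2) := by rw [_root_.zpow_neg, zpow_natCast, inv_pow]
    have hlim : Filter.Tendsto (fun n : ℕ => ((p : ℝ)⁻¹) ^ (n + 2)) Filter.atTop (nhds 0) := by
      have h1 : (p : ℝ)⁻¹ < 1 := by
        rw [inv_lt_one₀ (by positivity)]
        exact_mod_cast (Fact.out (p := p.Prime)).one_lt
      exact (tendsto_pow_atTop_nhds_zero_of_lt_one (by positivity) h1).comp
        (Filter.tendsto_add_atTop_nat 2)
    exact squeeze_zero (fun n => dist_nonneg) hb hlim
  have htd : Filter.Tendsto k Filter.atTop (nhds x) := by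
    rw [Units.isInducing_embedProduct.tendsto_nhds_iff]
    have hcomp : Filter.Tendsto
        (fun n => ((↑(k n) : Matrix (Fin d ⊕ Fin d) (Fin d ⊕ Fin d) ℤ_[p]),
          MulOpposite.op (↑(k n)⁻¹ : Matrix (Fin d ⊕ Fin d) (Fin d ⊕ Fin d) ℤ_[p])))
        Filter.atTop
        (nhds ((↑x : Matrix (Fin d ⊕ Fin d) (Fin d ⊕ Fin d) ℤ_[p]),
          MulOpposite.op (↑x⁻¹ : Matrix (Fin d ⊕ Fin d) (Fin d ⊕ Fin d) ℤ_[p]))) := by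
      refine Filter.Tendsto.prodMk_nhds ?_ ?_
      · exact hkey (fun n => ↑(k n)) ↑x (fun n => hkc n)
      · exact (MulOpposite.continuous_op.tendsto _).comp
          (hkey (fun n => ↑(k n)⁻¹) ↑x⁻¹ (fun n => (hkc n).units_inv))
    exact hcomp
  have hmem := mem_closure_of_tendsto htd (Filter.Eventually.of_forall fun n => hkK n)
  rwa [hclosed.closure_eq] at hmem
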